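/- Let a_n be the coefficient of xⁿ in the formal power series 1 − x·r(x) over ℤ, and let b_n be the coefficient of xⁿ in 1 + x − x²·r(x²). Then for every n, det((b_{i+j})_{0≤i,j≤n}) = det((a_{i+j})_{0≤i,j≤n}); that is, the two sequences have the same Hankel transform. -/

import Mathlib

open scoped Classical

/-- The Rueppel power series `r(x) = ∑_{k≥0} x^(2^k - 1)` over `ℤ`. -/
noncomputable def rueppel : PowerSeries ℤ :=
  PowerSeries.mk fun n => if ∃ k : ℕ, n = 2 ^ k - 1 then 1 else 0

/-- The power series `r(x²) = ∑_{k≥0} x^(2^(k+1) - 2)` over `ℤ`. -/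
noncomputable def rueppelSq : PowerSeries ℤ :=
  PowerSeries.mk fun n => if ∃ k : ℕ, n = 2 ^ (k + 1) - 2 then 1 else 0

lemma coeffA (m : ℕ) :
    PowerSeries.coeff m (1 - PowerSeries.X * rueppel) =
      if m = 0 then 1 else if ∃ k : ℕ, m = 2 ^ k then -1 else 0 := by
  rcases m with _ | m
  · simp [rueppel]
  · rw [map_sub, PowerSeries.coeff_succ_X_mul, PowerSeries.coeff_one]
    simp only [Nat.succ_ne_zero, if_false, rueppel, PowerSeries.coeff_mk]
    have h : (∃ k : ℕ, m = 2 ^ k - 1) ↔ (∃ k : ℕ, m + 1 = 2 ^ k) := by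
      constructor
      · rintro ⟨k, rfl⟩
        exact ⟨k, by have := Nat.one_le_two_pow (n := k); omega⟩
      · rintro ⟨k, hk⟩
        exact ⟨k, by omega⟩
    rw [h]
    split <;> simp

lemma coeffB (m : ℕ) :
    PowerSeries.coeff m (1 + PowerSeries.X - PowerSeries.X ^ 2 * rueppelSq) =
      if m = 0 then 1 else if m = 1 then 1
        else if ∃ k : ℕ, m = 2 ^ (k + 1) then -1 else 0 := by
  rcases m with _ | _ | m
  · simp [rueppelSq, PowerSeries.coeff_zero_eq_constantCoeff]
  · simp only [map_sub, map_add, PowerSeries.coeff_one, PowerSeries.coeff_X]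
    rw [show PowerSeries.X ^ 2 * rueppelSq
          = PowerSeries.X * (PowerSeries.X * rueppelSq) by ring,
        PowerSeries.coeff_succ_X_mul, PowerSeries.coeff_zero_eq_constantCoeff]
    simp
  · have h2 : m + 1 + 1 = m + 2 := by omega
    rw [h2, map_sub, map_add, PowerSeries.coeff_one, PowerSeries.coeff_X,
        show (m + 2) = m + 2 from rfl,
        PowerSeries.coeff_X_pow_mul rueppelSq 2 m]
    simp only [rueppelSq, PowerSeries.coeff_mk]
    have h : (∃ k : ℕ, m = 2 ^ (k + 1) - 2) ↔ (∃ k : ℕ, m + 2 = 2 ^ (k + 1)) := by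
      constructor
      · rintro ⟨k, rfl⟩
        refine ⟨k, ?_⟩
        have : (2:ℕ) ≤ 2 ^ (k + 1) := by
          calc (2:ℕ) = 2 ^ 1 := rfl
          _ ≤ 2 ^ (k + 1) := Nat.pow_le_pow_right (by norm_num) (by omega)
        omega
      · rintro ⟨k, hk⟩
        exact ⟨k, by omega⟩
    rw [h, if_neg (by omega : m + 2 ≠ 0), if_neg (by omega : m + 2 ≠ 1)]
    split <;> simp

lemma key (m : ℕ) :
    PowerSeries.coeff m (1 + PowerSeries.X - PowerSeries.X ^ 2 * rueppelSq) =
      (-1 : ℤ) ^ m * PowerSeries.coeff m (1 - PowerSeries.X * rueppel) := by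
  rw [coeffA, coeffB]
  rcases Nat.eq_zero_or_pos m with rfl | hm
  · simp
  rcases eq_or_ne m 1 with rfl | h1
  · have hex : ∃ k : ℕ, (1 : ℕ) = 2 ^ k := ⟨0, rfl⟩
    simp [hex]
  have hm0 : m ≠ 0 := by omega
  simp only [hm0, if_false, h1, if_false]
  have hiff : (∃ k : ℕ, m = 2 ^ (k + 1)) ↔ (∃ k : ℕ, m = 2 ^ k) := by
    constructor
    · rintro ⟨k, rfl⟩; exact ⟨k + 1, rfl⟩
    · rintro ⟨k, rfl⟩
      rcases k with _ | k
      · simp at h1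
      · exact ⟨k, rfl⟩
  rw [hiff]
  by_cases h : ∃ k : ℕ, m = 2 ^ k
  · obtain ⟨k, rfl⟩ := h
    have hk : k ≠ 0 := by rintro rfl; simp at h1
    have hev : Even (2 ^ k) := by
      rcases Nat.exists_eq_succ_of_ne_zero hk with ⟨j, rfl⟩
      exact ⟨2 ^ j, by rw [pow_succ]; ring⟩
    have hex : ∃ k' : ℕ, (2 : ℕ) ^ k = 2 ^ k' := ⟨k, rfl⟩
    simp [hex, hev.neg_one_pow]
  · simp [h]

/-- The expansions of `1 - x·r(x)` and `1 + x - x²·r(x²)` have the same Hankel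
transform. -/
theorem hankel_transform_eq (n : ℕ) :
    Matrix.det (Matrix.of fun i j : Fin (n + 1) =>
        PowerSeries.coeff (i.1 + j.1)
          (1 + PowerSeries.X - PowerSeries.X ^ 2 * rueppelSq)) =
      Matrix.det (Matrix.of fun i j : Fin (n + 1) =>
        PowerSeries.coeff (i.1 + j.1) (1 - PowerSeries.X * rueppel)) := by
  set A : Matrix (Fin (n + 1)) (Fin (n + 1)) ℤ :=
    Matrix.of fun i j : Fin (n + 1) =>
      PowerSeries.coeff (i.1 + j.1) (1 - PowerSeries.X * rueppel) with hA
  set d : Fin (n + 1) → ℤ := fun i => (-1 : ℤ) ^ i.1 with hd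
  have hB : (Matrix.of fun i j : Fin (n + 1) =>
      PowerSeries.coeff (i.1 + j.1)
        (1 + PowerSeries.X - PowerSeries.X ^ 2 * rueppelSq)) =
      Matrix.diagonal d * A * Matrix.diagonal d := by
    ext i j
    rw [Matrix.mul_diagonal, Matrix.diagonal_mul]
    simp only [Matrix.of_apply, hA, hd, key (i.1 + j.1), pow_add]
    ring
  rw [hB, Matrix.det_mul, Matrix.det_mul, Matrix.det_diagonal]
  have hs : (∏ i : Fin (n + 1), d i) * (∏ i : Fin (n + 1), d i) = 1 := by
    rw [← Finset.prod_mul_distrib]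
    apply Finset.prod_eq_one
    intro i _
    simp [hd, ← pow_add, (Even.add_self i.1).neg_one_pow]
  calc (∏ i : Fin (n + 1), d i) * A.det * (∏ i : Fin (n + 1), d i)
      = ((∏ i : Fin (n + 1), d i) * (∏ i : Fin (n + 1), d i)) * A.det := by ring
    _ = A.det := by rw [hs, one_mul]
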